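/- arXiv:1804.02221 — 2 statements merged into one kernel-verified Lean document; each statement's English description precedes it below -/
import Mathlib

section
/- With θ = min(1, h̄ / (h̄ - m)) where m = min_i h_i < h̄ and h̄ = Σ ω_i h_i ≥ 0 is the weighted average water height, the limited values ĥ_i = θ(h_i - h̄) + h̄ are all nonnegative. -/
/-- With `θ = min(1, h̄/(h̄ - m))`, `m = minᵢ hᵢ < h̄`, `h̄ ≥ 0` the weighted mean,
the limited water heights `ĥᵢ = θ(hᵢ - h̄) + h̄` are nonnegative. -/
theorem limiter_nonneg
    {M : ℕ} (h : Fin (M + 1) → ℝ) (ω : Fin (M + 1) → ℝ)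
    (hω : ∀ i, 0 < ω i) (hsum : ∑ i, ω i = 1)
    (hbar : ℝ) (hbar_def : hbar = ∑ i, ω i * h i) (hbar_nonneg : 0 ≤ hbar)
    (m : ℝ) (hm : m = Finset.univ.inf' Finset.univ_nonempty h) (hmlt : m < hbar)
    (θ : ℝ) (hθ : θ = min 1 (hbar / (hbar - m))) :
    ∀ i, 0 ≤ θ * (h i - hbar) + hbar := by
  intro i
  have hd : 0 < hbar - m := by linarith
  have hratio : 0 ≤ hbar / (hbar - m) := div_nonneg hbar_nonneg hd.le
  have hθ0 : 0 ≤ θ := by rw [hθ]; exact le_min zero_le_one hratio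
  have hθle : θ ≤ hbar / (hbar - m) := by rw [hθ]; exact min_le_right _ _
  have hmle : m ≤ h i := by
    rw [hm]; exact Finset.inf'_le _ (Finset.mem_univ i)
  have h1 : θ * (m - hbar) ≤ θ * (h i - hbar) :=
    mul_le_mul_of_nonneg_left (by linarith) hθ0
  have h2 : (hbar / (hbar - m)) * (m - hbar) ≤ θ * (m - hbar) :=
    mul_le_mul_of_nonpos_right hθle (by linarith)
  have h3 : (hbar / (hbar - m)) * (m - hbar) = -hbar := by
    field_simp
    ring
  linarith
end

section
/- Under the time step restrictions Δt ≤ ω₀a/(A + 2ū) whenever A + 2ū > 0, and, when h⁻ > 0 and B[[u]] < 0, Δt ≤ |g ω₀ a h⁻/(c̄ B [[u]])|, and assuming h⁺, h⁻ ≥ 0 and h⁻ = 0 implies u⁻ = 0, the quantity (1/2)h⁻ - (Δt/(ω₀a))·F₁ is nonnegative, where F₁ = h̄ū - (1/(4g))(gA[[h]] + c̄B[[u]]) is the entropy stable water-height flux with c̄ = (√(g h⁺) + √(g h⁻))/2. -/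
/-- Positivity of the surface update term for the entropy stable water-height
flux under the time step restrictions of Lemma (Preservation of non-negative
mean water heights). -/
theorem surface_update_nonneg
    (hp hm up um g dt w0 a : ℝ)
    (hg : 0 < g) (hdt : 0 < dt) (hw0 : 0 < w0) (ha : 0 < a)
    (hhp : 0 ≤ hp) (hhm : 0 ≤ hm)
    (hdrym : hm = 0 → um = 0) (hdryp : hp = 0 → up = 0)
    (ubar c A B F1 : ℝ)
    (hub : ubar = (up + um) / 2)
    (hc : c = (Real.sqrt (g * hp) + Real.sqrt (g * hm)) / 2)
    (hA : A = |ubar + c| + |ubar - c|) (hB : B = |ubar + c| - |ubar - c|)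
    (hF1 : F1 = ((hp + hm) / 2) * ubar
        - (1 / (4 * g)) * (g * A * (hp - hm) + c * B * (up - um)))
    (hdt1 : dt * (A + 2 * ubar) ≤ w0 * a)
    (hdt2 : 0 < hm → c * B * (up - um) < 0 →
      dt * |c * B * (up - um)| ≤ g * w0 * a * hm) :
    0 ≤ (1 / 2) * hm - (dt / (w0 * a)) * F1 := by
  have hc0 : 0 ≤ c := by
    rw [hc]
    positivity
  have hwa : (0:ℝ) < w0 * a := by positivity
  -- A dominates 2|ubar|
  have hA2u : 2 * |ubar| ≤ A := by
    have h1 : |(ubar + c) + (ubar - c)| ≤ |ubar + c| + |ubar - c| := abs_add_le _ _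
    have h2 : |(ubar + c) + (ubar - c)| = 2 * |ubar| := by
      rw [show (ubar + c) + (ubar - c) = 2 * ubar by ring, abs_mul]
      simp [abs_of_nonneg]
    linarith [hA ▸ (h2 ▸ h1)]
  have hAub : 2 * ubar ≤ A := le_trans (by linarith [le_abs_self ubar]) hA2u
  have hAub' : -A ≤ 2 * ubar := by linarith [neg_abs_le ubar]
  have hA0 : 0 ≤ A := by linarith [abs_nonneg ubar]
  -- |B| ≤ A
  have hBleA : |B| ≤ A := by
    rw [abs_le, hA, hB]
    constructor <;> linarith [abs_nonneg (ubar + c), abs_nonneg (ubar - c)]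
  -- B * A = 4 * ubar * c
  have hBA : B * A = 4 * ubar * c := by
    have e1 : (|ubar + c| - |ubar - c|) * (|ubar + c| + |ubar - c|)
        = |ubar + c| ^ 2 - |ubar - c| ^ 2 := by ring
    rw [hB, hA, e1, sq_abs, sq_abs]; ring
  -- Lower bound for dt * T where T = c * B * (up - um)
  have hT : -(g * w0 * a * hm) ≤ dt * (c * B * (up - um)) := by
    rcases lt_or_ge (c * B * (up - um)) 0 with hneg | hpos
    · rcases hhm.lt_or_eq with hm0 | hm0
      · -- hm > 0 : use the second time step restriction
        have h2 := hdt2 hm0 hneg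
        rw [abs_of_neg hneg] at h2
        linarith
      · -- hm = 0 : T is in fact nonneg, contradiction
        exfalso
        have hum : um = 0 := hdrym hm0.symm
        have hup : up = 2 * ubar := by rw [hub, hum]; ring
        have hTA : 0 ≤ (c * B * (up - um)) * A := by
          rw [hum, hup]
          have : c * B * (2 * ubar - 0) * A = 2 * c * ubar * (B * A) := by ring
          rw [this, hBA]
          nlinarith [sq_nonneg (ubar * c)]
        rcases hA0.lt_or_eq with hApos | hA0'
        · nlinarith
        · have hB0 : B = 0 := by
            have := hBleA
            rw [← hA0'] at this
            exact abs_eq_zero.mp (le_antisymm this (abs_nonneg B))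
          rw [hB0] at hneg
          simp at hneg
    · have : 0 ≤ dt * (c * B * (up - um)) := mul_nonneg hdt.le hpos
      nlinarith [mul_pos (mul_pos hg hw0) ha]
  -- pieces of the flux bound
  have t1 : dt * (2 * ubar - A) ≤ 0 := by nlinarith
  have t2 : g * hp * (dt * (2 * ubar - A)) ≤ 0 :=
    mul_nonpos_of_nonneg_of_nonpos (by positivity) t1
  have t3 : g * hm * (dt * (A + 2 * ubar)) ≤ g * hm * (w0 * a) :=
    mul_le_mul_of_nonneg_left hdt1 (by positivity)
  have key : (dt / (w0 * a)) * F1 ≤ (1 / 2) * hm := by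
    rw [div_mul_eq_mul_div, div_le_iff₀ hwa, hF1]
    have e : dt * (((hp + hm) / 2) * ubar
        - (1 / (4 * g)) * (g * A * (hp - hm) + c * B * (up - um)))
        = (g * hp * (dt * (2 * ubar - A)) + g * hm * (dt * (A + 2 * ubar))
            - dt * (c * B * (up - um))) / (4 * g) := by
      field_simp
      ring
    rw [e, div_le_iff₀ (by positivity : (0:ℝ) < 4 * g)]
    linarith [t2, t3, hT]
  linarith
end
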